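/- Let A be a connected Γ-graded bialgebra over a field k, where Γ is a discrete submonoid of the half-plane {(r,d) ∈ ℝ² : r > 0, or r = 0 and d ≥ 0}, and connectedness means A⁰ = k. For a homogeneous element a ∈ A, write Δ(a) = Σᵢ₌₁ⁿ bᵢ ⊗ cᵢ with each bᵢ, cᵢ homogeneous and n minimal. Then for every i ∈ {1,…,n}, the set L(bᵢ) is contained in L(a) and the set R(cᵢ) is contained in R(a), where L(x) (resp. R(x)) denotes the set of degrees β (resp. γ) such that Δ(x) has a nonzero component in A^β ⊗ A^γ. -/

import Mathlib

set_option linter.unusedSectionVars false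
set_option maxHeartbeats 800000


open scoped TensorProduct
open TensorProduct

noncomputable section

namespace MVPaper

variable {k A : Type} [Field k] [Ring A] [Bialgebra k A]
variable {ι : Type} [AddCommMonoid ι] [DecidableEq ι]
variable (𝒜 : ι → Submodule k A) [DirectSum.Decomposition 𝒜]

/-- The projection of `A` onto its degree-`γ` homogeneous component. -/
def proj (γ : ι) : A →ₗ[k] A :=
  (𝒜 γ).subtype ∘ₗ (DirectSum.component k ι (fun i => 𝒜 i) γ) ∘ₗ
    (DirectSum.decomposeLinearEquiv 𝒜).toLinearMap

/-- The projection of `A ⊗ A` onto its bidegree-`(β, γ)` homogeneous component. -/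
def projT (β γ : ι) : A ⊗[k] A →ₗ[k] A ⊗[k] A :=
  TensorProduct.map (proj 𝒜 β) (proj 𝒜 γ)

/-- `L(a)`: the set of left degrees appearing in the coproduct of `a`. -/
def Lset (a : A) : Set ι :=
  {β | ∃ γ, projT 𝒜 β γ (Coalgebra.comul (R := k) a) ≠ 0}

/-- `R(a)`: the set of right degrees appearing in the coproduct of `a`. -/
def Rset (a : A) : Set ι :=
  {γ | ∃ β, projT 𝒜 β γ (Coalgebra.comul (R := k) a) ≠ 0}

/-- The coproduct respects the grading. -/
def ComulGraded : Prop :=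
  ∀ (γ : ι), ∀ a ∈ 𝒜 γ, ∀ β δ : ι, β + δ ≠ γ →
    projT 𝒜 β δ (Coalgebra.comul (R := k) a) = 0

/-- The coproduct of any element is the (finite) sum of its homogeneous components. -/
def ComulDecomposes : Prop :=
  ∀ a : A, ∃ S : Finset (ι × ι),
    Coalgebra.comul (R := k) a = ∑ p ∈ S, projT 𝒜 p.1 p.2 (Coalgebra.comul (R := k) a)

/-- Connectedness: the degree-`0` component is spanned by the unit. -/
def GradedConnected : Prop := 𝒜 0 = Submodule.span k {(1 : A)}

end MVPaper

namespace MVPaper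

variable {k A : Type} [Field k] [Ring A] [Bialgebra k A]
variable {Γ : AddSubmonoid (ℝ × ℝ)} [DecidableEq Γ]
variable (𝒜 : Γ → Submodule k A) [DirectSum.Decomposition 𝒜]

/-- `Γ` is contained in the right half-plane. -/
def HalfPlane (Γ : AddSubmonoid (ℝ × ℝ)) : Prop :=
  ∀ γ ∈ Γ, 0 < γ.1 ∨ (γ.1 = 0 ∧ 0 ≤ γ.2)

/-- The slope `d/r` of a point `(r, d)` of the right half-plane, with `∞` for `r = 0`. -/
def slope (v : ℝ × ℝ) : WithTop ℝ :=
  if v.1 = 0 then ⊤ else (v.2 / v.1 : ℝ)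

/-- Membership in `Γ_μ`. -/
def memSlope (μ : WithTop ℝ) (γ : Γ) : Prop :=
  (γ : ℝ × ℝ) = 0 ∨ slope (γ : ℝ × ℝ) = μ

/-- Membership in `Γ_{≤μ}`. -/
def memSlopeLE (μ : WithTop ℝ) (γ : Γ) : Prop :=
  (γ : ℝ × ℝ) = 0 ∨ slope (γ : ℝ × ℝ) ≤ μ

/-- Membership in `Γ_{≥μ}`. -/
def memSlopeGE (μ : WithTop ℝ) (γ : Γ) : Prop :=
  (γ : ℝ × ℝ) = 0 ∨ μ ≤ slope (γ : ℝ × ℝ)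

/-- `a` is a homogeneous semistable element of slope `μ` and degree `γ`. -/
def IsSemistableAt (μ : WithTop ℝ) (γ : Γ) (a : A) : Prop :=
  a ∈ 𝒜 γ ∧ memSlope μ γ ∧ ∀ β ∈ Lset 𝒜 a, memSlopeLE μ β

/-- `a` is a homogeneous semistable element of slope `μ`. -/
def IsSemistable (μ : WithTop ℝ) (a : A) : Prop :=
  ∃ γ : Γ, IsSemistableAt 𝒜 μ γ a

/-- `A_μ`: the span of the homogeneous elements of slope `μ`. -/
def Aslope (μ : WithTop ℝ) : Submodule k A :=
  ⨆ γ ∈ {γ : Γ | memSlope μ γ}, 𝒜 γ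

/-- `A_{[μ]}`: the span of the semistable elements of slope `μ`. -/
def Asemi (μ : WithTop ℝ) : Submodule k A :=
  Submodule.span k {a : A | IsSemistable 𝒜 μ a}

open Classical in
/-- The projection `p_μ : A → A_μ`. -/
def pSlope (μ : WithTop ℝ) : A →ₗ[k] A :=
  (DirectSum.toModule k Γ A fun γ => if memSlope μ γ then (𝒜 γ).subtype else 0) ∘ₗ
    (DirectSum.decomposeLinearEquiv 𝒜).toLinearMap

/-- Ordered monomials whose factors have slopes in `J`: products of homogeneous
semistable elements of nonzero degree, with weakly decreasing slopes. -/
def IsOrderedMonomialIn (J : Set (WithTop ℝ)) (a : A) : Prop :=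
  ∃ (p : ℕ) (g : Fin p → A) (γ : Fin p → Γ) (μ : Fin p → WithTop ℝ),
    (∀ i, IsSemistableAt 𝒜 (μ i) (γ i) (g i)) ∧
    (∀ i, (γ i : ℝ × ℝ) ≠ 0) ∧ (∀ i, μ i ∈ J) ∧
    Antitone μ ∧ a = (List.ofFn g).prod

/-- Ordered monomials. -/
def IsOrderedMonomial (a : A) : Prop :=
  IsOrderedMonomialIn 𝒜 Set.univ a

/-- The points of `L(a)`, viewed in `ℝ²`. -/
def Lpts (a : A) : Set (ℝ × ℝ) :=
  (fun γ : Γ => (γ : ℝ × ℝ)) '' Lset 𝒜 a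

/-- The polytope `Pol(a)`: the convex hull of `L(a)` in `ℝ²`. -/
def Pol (a : A) : Set (ℝ × ℝ) :=
  convexHull ℝ (Lpts 𝒜 a)

/-- `Pol^∧(a)` for `a` of degree `γ`: the region between the upper rim of `Pol(a)`
and the straight segment from `0` to `γ`. -/
def PolWedge (a : A) (γ : Γ) : Set (ℝ × ℝ) :=
  {p | (∃ t ∈ Set.Icc (0 : ℝ) 1,
          p.1 = t * (γ : ℝ × ℝ).1 ∧ t * (γ : ℝ × ℝ).2 ≤ p.2) ∧
       (∃ q ∈ Pol 𝒜 a, q.1 = p.1 ∧ p.2 ≤ q.2)}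

end MVPaper

namespace MVPaper

section AuxLemmas

variable {k A : Type} [Field k] [Ring A] [Bialgebra k A]
variable {ι : Type} [AddCommMonoid ι] [DecidableEq ι]
variable (𝒜 : ι → Submodule k A) [DirectSum.Decomposition 𝒜]

lemma proj_of_mem {γ β : ι} {x : A} (hx : x ∈ 𝒜 γ) :
    proj 𝒜 β x = if β = γ then x else 0 := by
  have h : proj 𝒜 β x = ((DirectSum.decompose 𝒜 x) β : A) := rfl
  rw [h]
  split_ifs with hh
  · subst hh; exact DirectSum.decompose_of_mem_same 𝒜 hx
  · exact DirectSum.decompose_of_mem_ne 𝒜 hx (Ne.symm hh)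

lemma exists_dual {η : Type} [DecidableEq η] {v : η → A} (hv : LinearIndependent k v) (i : η) :
    ∃ f : A →ₗ[k] k, ∀ j, f (v j) = if j = i then 1 else 0 := by
  classical
  obtain ⟨q, hq⟩ := Submodule.exists_isCompl (Submodule.span k (Set.range v))
  refine ⟨((Module.Basis.span hv).coord i) ∘ₗ (Submodule.projectionOnto _ q hq), fun j => ?_⟩
  have hmem : v j ∈ Submodule.span k (Set.range v) :=
    Submodule.subset_span (Set.mem_range_self j)
  have h1 : (Submodule.projectionOnto _ q hq) (v j) = (Module.Basis.span hv) j := by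
    have h2 : v j = ((⟨v j, hmem⟩ : Submodule.span k (Set.range v)) : A) := rfl
    rw [h2, Submodule.projectionOnto_apply_left]
    exact (Module.Basis.span_apply hv j).symm
  simp only [LinearMap.comp_apply, h1, Module.Basis.coord_apply, Module.Basis.repr_self]
  exact Finsupp.single_apply

lemma exists_dual_fin {n : ℕ} {v : Fin n → A} {P : Fin n → Prop}
    (hv : LinearIndependent k (fun j : {j // P j} => v j)) (i : Fin n) (hi : P i) :
    ∃ f : A →ₗ[k] k, ∀ j, P j → f (v j) = if j = i then 1 else 0 := by
  classical
  obtain ⟨f, hf⟩ := exists_dual hv ⟨i, hi⟩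
  exact ⟨f, fun j hj => by rw [hf ⟨j, hj⟩]; simp [Subtype.ext_iff]⟩

lemma sum_tmul_ne_zero_right {M : Type} [AddCommGroup M] [Module k M]
    {η : Type} [DecidableEq η] (s : Finset η) (t : η → M) (w : η → A)
    (f : A →ₗ[k] k) (i : η) (hi : i ∈ s)
    (hf : ∀ j ∈ s, f (w j) = if j = i then 1 else 0) (hti : t i ≠ 0) :
    ∑ j ∈ s, t j ⊗ₜ[k] w j ≠ 0 := by
  intro h0
  have h1 := congrArg ((TensorProduct.rid k M).toLinearMap ∘ₗ LinearMap.lTensor M f) h0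
  simp only [map_sum, LinearMap.comp_apply, LinearMap.lTensor_tmul, LinearEquiv.coe_coe,
    TensorProduct.rid_tmul, map_zero] at h1
  apply hti
  rw [← h1]
  rw [Finset.sum_congr rfl (fun j hj => by rw [hf j hj])]
  simp only [ite_smul, one_smul, zero_smul]
  rw [Finset.sum_ite_eq' s i t, if_pos hi]

lemma sum_tmul_ne_zero_left {M : Type} [AddCommGroup M] [Module k M]
    {η : Type} [DecidableEq η] (s : Finset η) (t : η → M) (w : η → A)
    (f : A →ₗ[k] k) (i : η) (hi : i ∈ s)
    (hf : ∀ j ∈ s, f (w j) = if j = i then 1 else 0) (hti : t i ≠ 0) :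
    ∑ j ∈ s, w j ⊗ₜ[k] t j ≠ 0 := by
  intro h0
  have h1 := congrArg ((TensorProduct.lid k M).toLinearMap ∘ₗ LinearMap.rTensor M f) h0
  simp only [map_sum, LinearMap.comp_apply, LinearMap.rTensor_tmul, LinearEquiv.coe_coe,
    TensorProduct.lid_tmul, map_zero] at h1
  apply hti
  rw [← h1]
  rw [Finset.sum_congr rfl (fun j hj => by rw [hf j hj])]
  simp only [ite_smul, one_smul, zero_smul]
  rw [Finset.sum_ite_eq' s i t, if_pos hi]

lemma projT_sum {n : ℕ} (b c : Fin n → A) (β δ : Fin n → ι)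
    (hb : ∀ i, b i ∈ 𝒜 (β i)) (hc : ∀ i, c i ∈ 𝒜 (δ i)) (β0 δ0 : ι) :
    projT 𝒜 β0 δ0 (∑ j, b j ⊗ₜ[k] c j)
      = ∑ j ∈ Finset.univ.filter (fun j => β j = β0 ∧ δ j = δ0), b j ⊗ₜ[k] c j := by
  classical
  rw [map_sum, Finset.sum_filter]
  refine Finset.sum_congr rfl fun j _ => ?_
  rw [projT, TensorProduct.map_tmul, proj_of_mem 𝒜 (hb j), proj_of_mem 𝒜 (hc j)]
  by_cases h1 : β j = β0 <;> by_cases h2 : δ j = δ0 <;>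
    simp [h1, h2, eq_comm (a := β0), eq_comm (a := δ0)]

lemma exists_shorter {m : ℕ} (b c : Fin (m+1) → A) (β δ : Fin (m+1) → ι)
    (hb : ∀ i, b i ∈ 𝒜 (β i)) (hc : ∀ i, c i ∈ 𝒜 (δ i)) {x : A ⊗[k] A}
    (hsum : x = ∑ i, b i ⊗ₜ[k] c i)
    (j0 : Fin (m+1)) (lam : Fin (m+1) → k) (hlam0 : lam j0 = 0)
    (hrep : c j0 = ∑ j, lam j • c j)
    (hhom : ∀ j, lam j ≠ 0 → β j = β j0) :
    ∃ (b' c' : Fin m → A) (β' δ' : Fin m → ι),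
      (∀ i, b' i ∈ 𝒜 (β' i)) ∧ (∀ i, c' i ∈ 𝒜 (δ' i)) ∧
      x = ∑ i, b' i ⊗ₜ[k] c' i := by
  classical
  refine ⟨fun x => b (j0.succAbove x) + lam (j0.succAbove x) • b j0,
    fun x => c (j0.succAbove x), fun x => β (j0.succAbove x), fun x => δ (j0.succAbove x),
    fun x => ?_, fun x => hc _, ?_⟩
  · by_cases h : lam (j0.succAbove x) = 0
    · simpa [h] using hb (j0.succAbove x)
    · have e := hhom _ h
      show b (j0.succAbove x) + lam (j0.succAbove x) • b j0 ∈ 𝒜 (β (j0.succAbove x))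
      rw [e]
      exact (𝒜 _).add_mem (e ▸ hb (j0.succAbove x)) ((𝒜 _).smul_mem _ (hb j0))
  · rw [hsum, Fin.sum_univ_succAbove _ j0]
    have h3 : ∑ x : Fin m, (b (j0.succAbove x) + lam (j0.succAbove x) • b j0) ⊗ₜ[k] c (j0.succAbove x)
        = (∑ x : Fin m, b (j0.succAbove x) ⊗ₜ[k] c (j0.succAbove x))
          + b j0 ⊗ₜ[k] (∑ x : Fin m, lam (j0.succAbove x) • c (j0.succAbove x)) := by
      rw [TensorProduct.tmul_sum, ← Finset.sum_add_distrib]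
      refine Finset.sum_congr rfl fun x _ => ?_
      rw [TensorProduct.add_tmul, TensorProduct.smul_tmul]
    rw [h3]
    have h2 : ∑ x : Fin m, lam (j0.succAbove x) • c (j0.succAbove x) = c j0 := by
      have h4 := Fin.sum_univ_succAbove (fun j => lam j • c j) j0
      rw [hlam0, zero_smul, zero_add] at h4
      rw [← h4, ← hrep]
    rw [h2]
    abel

lemma exists_shorter' {m : ℕ} (b c : Fin (m+1) → A) (β δ : Fin (m+1) → ι)
    (hb : ∀ i, b i ∈ 𝒜 (β i)) (hc : ∀ i, c i ∈ 𝒜 (δ i)) {x : A ⊗[k] A}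
    (hsum : x = ∑ i, b i ⊗ₜ[k] c i)
    (j0 : Fin (m+1)) (lam : Fin (m+1) → k) (hlam0 : lam j0 = 0)
    (hrep : b j0 = ∑ j, lam j • b j)
    (hhom : ∀ j, lam j ≠ 0 → δ j = δ j0) :
    ∃ (b' c' : Fin m → A) (β' δ' : Fin m → ι),
      (∀ i, b' i ∈ 𝒜 (β' i)) ∧ (∀ i, c' i ∈ 𝒜 (δ' i)) ∧
      x = ∑ i, b' i ⊗ₜ[k] c' i := by
  classical
  refine ⟨fun x => b (j0.succAbove x),
    fun x => c (j0.succAbove x) + lam (j0.succAbove x) • c j0,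
    fun x => β (j0.succAbove x), fun x => δ (j0.succAbove x),
    fun x => hb _, fun x => ?_, ?_⟩
  · by_cases h : lam (j0.succAbove x) = 0
    · simpa [h] using hc (j0.succAbove x)
    · have e := hhom _ h
      show c (j0.succAbove x) + lam (j0.succAbove x) • c j0 ∈ 𝒜 (δ (j0.succAbove x))
      rw [e]
      exact (𝒜 _).add_mem (e ▸ hc (j0.succAbove x)) ((𝒜 _).smul_mem _ (hc j0))
  · rw [hsum, Fin.sum_univ_succAbove _ j0]
    have h3 : ∑ x : Fin m, b (j0.succAbove x) ⊗ₜ[k] (c (j0.succAbove x) + lam (j0.succAbove x) • c j0)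
        = (∑ x : Fin m, b (j0.succAbove x) ⊗ₜ[k] c (j0.succAbove x))
          + (∑ x : Fin m, lam (j0.succAbove x) • b (j0.succAbove x)) ⊗ₜ[k] c j0 := by
      rw [TensorProduct.sum_tmul, ← Finset.sum_add_distrib]
      refine Finset.sum_congr rfl fun x _ => ?_
      rw [TensorProduct.tmul_add, ← TensorProduct.smul_tmul]
    rw [h3]
    have h2 : ∑ x : Fin m, lam (j0.succAbove x) • b (j0.succAbove x) = b j0 := by
      have h4 := Fin.sum_univ_succAbove (fun j => lam j • b j) j0
      rw [hlam0, zero_smul, zero_add] at h4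
      rw [← h4, ← hrep]
    rw [h2]
    abel

lemma exists_rep {n : ℕ} (v : Fin n → A) (P : Fin n → Prop) [DecidablePred P]
    (g : {j // P j} → k) (hg0 : ∑ j, g j • v (j : Fin n) = 0)
    (i0 : {j // P j}) (hi0 : g i0 ≠ 0) :
    ∃ lam : Fin n → k, lam (i0 : Fin n) = 0 ∧ v (i0 : Fin n) = ∑ j, lam j • v j ∧
      ∀ j, lam j ≠ 0 → P j := by
  classical
  refine ⟨fun j => if h : P j then
      (if (⟨j, h⟩ : {j // P j}) = i0 then 0 else -(g ⟨j, h⟩ / g i0)) else 0, ?_, ?_, ?_⟩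
  · simp
  · have e1 : ∑ j, (if h : P j then
        (if (⟨j, h⟩ : {j // P j}) = i0 then 0 else -(g ⟨j, h⟩ / g i0)) else 0) • v j
        = ∑ j ∈ Finset.univ.filter P, (if h : P j then
        (if (⟨j, h⟩ : {j // P j}) = i0 then 0 else -(g ⟨j, h⟩ / g i0)) else 0) • v j := by
      rw [Finset.sum_filter_of_ne]
      intro j _ hj
      by_contra hPj
      exact hj (by simp [dif_neg hPj])
    have e2 : ∑ j ∈ Finset.univ.filter P, (if h : P j then
        (if (⟨j, h⟩ : {j // P j}) = i0 then 0 else -(g ⟨j, h⟩ / g i0)) else 0) • v j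
        = ∑ j : {j // P j}, (if h : P (j : Fin n) then
        (if (⟨(j : Fin n), h⟩ : {j // P j}) = i0 then 0 else -(g ⟨(j : Fin n), h⟩ / g i0))
          else 0) • v (j : Fin n) := by
      exact Finset.sum_subtype (Finset.univ.filter P) (fun j => by simp) _
    have e3 : ∀ j : {j // P j}, (if h : P (j : Fin n) then
        (if (⟨(j : Fin n), h⟩ : {j // P j}) = i0 then 0 else -(g ⟨(j : Fin n), h⟩ / g i0))
          else 0) • v (j : Fin n)
        = (-(g i0)⁻¹) • (g j • v (j : Fin n))
          - (if j = i0 then (-(g i0)⁻¹) • (g i0 • v (i0 : Fin n)) else 0) := by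
      intro j
      by_cases hj : j = i0
      · subst hj
        simp
      · simp only [dif_pos j.2, Subtype.coe_eta, if_neg hj, sub_zero, smul_smul]
        congr 1
        ring
    rw [e1, e2, Finset.sum_congr rfl (fun j _ => e3 j), Finset.sum_sub_distrib,
      Finset.sum_ite_eq' Finset.univ i0
        (fun _ => (-(g i0)⁻¹) • (g i0 • v (i0 : Fin n))),
      if_pos (Finset.mem_univ i0), ← Finset.smul_sum, hg0, smul_zero, zero_sub,
      neg_smul, neg_neg, smul_smul, inv_mul_cancel₀ hi0, one_smul]
  · intro j hj
    by_cases hPj : P j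
    · exact hPj
    · exact absurd (by simp [dif_neg hPj]) hj

lemma indep_of_min {n : ℕ} (b c : Fin n → A) (β δ : Fin n → ι)
    (hb : ∀ i, b i ∈ 𝒜 (β i)) (hc : ∀ i, c i ∈ 𝒜 (δ i)) {x : A ⊗[k] A}
    (hsum : x = ∑ i, b i ⊗ₜ[k] c i)
    (hmin : ∀ m : ℕ, m < n →
      ¬ ∃ (b' c' : Fin m → A) (β' δ' : Fin m → ι),
          (∀ i, b' i ∈ 𝒜 (β' i)) ∧ (∀ i, c' i ∈ 𝒜 (δ' i)) ∧
          x = ∑ i, b' i ⊗ₜ[k] c' i)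
    (β0 δ0 : ι) :
    LinearIndependent k (fun j : {j : Fin n // β j = β0 ∧ δ j = δ0} => c j) := by
  classical
  by_contra hdep
  rw [Fintype.not_linearIndependent_iff] at hdep
  obtain ⟨g, hg0, i0, hi0⟩ := hdep
  obtain ⟨lam, hlam0, hrep, hsupp⟩ :=
    exists_rep c (fun j => β j = β0 ∧ δ j = δ0) g hg0 i0 hi0
  obtain ⟨m, rfl⟩ : ∃ m, n = m + 1 :=
    ⟨n - 1, (Nat.succ_pred_eq_of_pos (i0 : Fin n).pos).symm⟩
  refine hmin m (Nat.lt_succ_self m)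
    (exists_shorter 𝒜 b c β δ hb hc hsum (i0 : Fin (m+1)) lam hlam0 hrep ?_)
  exact fun j hj => ((hsupp j hj).1).trans i0.2.1.symm

lemma indep_of_min' {n : ℕ} (b c : Fin n → A) (β δ : Fin n → ι)
    (hb : ∀ i, b i ∈ 𝒜 (β i)) (hc : ∀ i, c i ∈ 𝒜 (δ i)) {x : A ⊗[k] A}
    (hsum : x = ∑ i, b i ⊗ₜ[k] c i)
    (hmin : ∀ m : ℕ, m < n →
      ¬ ∃ (b' c' : Fin m → A) (β' δ' : Fin m → ι),
          (∀ i, b' i ∈ 𝒜 (β' i)) ∧ (∀ i, c' i ∈ 𝒜 (δ' i)) ∧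
          x = ∑ i, b' i ⊗ₜ[k] c' i)
    (β0 δ0 : ι) :
    LinearIndependent k (fun j : {j : Fin n // β j = β0 ∧ δ j = δ0} => b j) := by
  classical
  by_contra hdep
  rw [Fintype.not_linearIndependent_iff] at hdep
  obtain ⟨g, hg0, i0, hi0⟩ := hdep
  obtain ⟨lam, hlam0, hrep, hsupp⟩ :=
    exists_rep b (fun j => β j = β0 ∧ δ j = δ0) g hg0 i0 hi0
  obtain ⟨m, rfl⟩ : ∃ m, n = m + 1 :=
    ⟨n - 1, (Nat.succ_pred_eq_of_pos (i0 : Fin n).pos).symm⟩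
  refine hmin m (Nat.lt_succ_self m)
    (exists_shorter' 𝒜 b c β δ hb hc hsum (i0 : Fin (m+1)) lam hlam0 hrep ?_)
  exact fun j hj => ((hsupp j hj).2).trans i0.2.2.symm

lemma terms_ne_zero {n : ℕ} (b c : Fin n → A) (β δ : Fin n → ι)
    (hb : ∀ i, b i ∈ 𝒜 (β i)) (hc : ∀ i, c i ∈ 𝒜 (δ i)) {x : A ⊗[k] A}
    (hsum : x = ∑ i, b i ⊗ₜ[k] c i)
    (hmin : ∀ m : ℕ, m < n →
      ¬ ∃ (b' c' : Fin m → A) (β' δ' : Fin m → ι),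
          (∀ i, b' i ∈ 𝒜 (β' i)) ∧ (∀ i, c' i ∈ 𝒜 (δ' i)) ∧
          x = ∑ i, b' i ⊗ₜ[k] c' i)
    (j0 : Fin n) : b j0 ≠ 0 ∧ c j0 ≠ 0 := by
  obtain ⟨m, rfl⟩ : ∃ m, n = m + 1 :=
    ⟨n - 1, (Nat.succ_pred_eq_of_pos j0.pos).symm⟩
  constructor
  · intro hb0
    exact hmin m (Nat.lt_succ_self m)
      (exists_shorter' 𝒜 b c β δ hb hc hsum j0 (fun _ => 0) rfl
        (by simp [hb0]) (fun j hj => absurd rfl hj))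
  · intro hc0
    exact hmin m (Nat.lt_succ_self m)
      (exists_shorter 𝒜 b c β δ hb hc hsum j0 (fun _ => 0) rfl
        (by simp [hc0]) (fun j hj => absurd rfl hj))


end AuxLemmas

end MVPaper

open MVPaper in
/-- In a connected `Γ`-graded bialgebra `A` over a field `k`, where `Γ` is a
discrete submonoid of the right half-plane, if `Δ(a) = ∑ i, bᵢ ⊗ cᵢ` is a writing of the
coproduct of a homogeneous element `a` with all `bᵢ, cᵢ` homogeneous and the number of terms
minimal, then `L(bᵢ) ⊆ L(a)` and `R(cᵢ) ⊆ R(a)` for all `i`. -/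
theorem lemma_LbiRci
    {k A : Type} [Field k] [Ring A] [Bialgebra k A]
    {Γ : AddSubmonoid (ℝ × ℝ)} [DecidableEq Γ]
    (𝒜 : Γ → Submodule k A) [DirectSum.Decomposition 𝒜] [SetLike.GradedMonoid 𝒜]
    (hHP : HalfPlane Γ) (hdisc : DiscreteTopology Γ)
    (hconn : GradedConnected 𝒜) (hgr : ComulGraded 𝒜) (hdec : ComulDecomposes 𝒜)
    (a : A) (γa : Γ) (ha : a ∈ 𝒜 γa)
    (n : ℕ) (b c : Fin n → A) (β δ : Fin n → Γ)
    (hb : ∀ i, b i ∈ 𝒜 (β i)) (hc : ∀ i, c i ∈ 𝒜 (δ i))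
    (hsum : Coalgebra.comul (R := k) a = ∑ i, b i ⊗ₜ[k] c i)
    (hmin : ∀ m : ℕ, m < n →
      ¬ ∃ (b' c' : Fin m → A) (β' δ' : Fin m → Γ),
          (∀ i, b' i ∈ 𝒜 (β' i)) ∧ (∀ i, c' i ∈ 𝒜 (δ' i)) ∧
          Coalgebra.comul (R := k) a = ∑ i, b' i ⊗ₜ[k] c' i)
    (i : Fin n) :
    Lset 𝒜 (b i) ⊆ Lset 𝒜 a ∧ Rset 𝒜 (c i) ⊆ Rset 𝒜 a := by
  classical
  have hne := terms_ne_zero 𝒜 b c β δ hb hc hsum hmin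
  have hindC := indep_of_min 𝒜 b c β δ hb hc hsum hmin
  have hindB := indep_of_min' 𝒜 b c β δ hb hc hsum hmin
  -- every (β j, δ j) is in L(a) × R(a)
  have hclass : ∀ β0 δ0 : Γ, projT 𝒜 β0 δ0 (Coalgebra.comul (R := k) a)
      = ∑ j ∈ Finset.univ.filter (fun j => β j = β0 ∧ δ j = δ0), b j ⊗ₜ[k] c j := by
    intro β0 δ0
    rw [hsum]
    exact projT_sum 𝒜 b c β δ hb hc β0 δ0
  have hLR : ∀ j : Fin n, β j ∈ Lset 𝒜 a ∧ δ j ∈ Rset 𝒜 a := by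
    intro j
    have h1 : projT 𝒜 (β j) (δ j) (Coalgebra.comul (R := k) a) ≠ 0 := by
      rw [hclass]
      obtain ⟨f, hf⟩ := exists_dual_fin (hindB (β j) (δ j)) j ⟨rfl, rfl⟩
      exact sum_tmul_ne_zero_left _ c b f j (by simp)
        (fun l hl => hf l (by simpa using hl)) (hne j).2
    exact ⟨⟨δ j, h1⟩, ⟨β j, h1⟩⟩
  -- common setup
  have hW : (LinearMap.rTensor A (Coalgebra.comul (R := k))) (Coalgebra.comul (R := k) a)
      = ∑ j, (Coalgebra.comul (R := k) (b j)) ⊗ₜ[k] c j := by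
    rw [hsum, map_sum]
    exact Finset.sum_congr rfl fun j _ => LinearMap.rTensor_tmul _ _ _ _
  have hW' : (LinearMap.lTensor A (Coalgebra.comul (R := k))) (Coalgebra.comul (R := k) a)
      = ∑ j, b j ⊗ₜ[k] (Coalgebra.comul (R := k) (c j)) := by
    rw [hsum, map_sum]
    exact Finset.sum_congr rfl fun j _ => LinearMap.lTensor_tmul _ _ _ _
  have hassoc := Coalgebra.coassoc_apply (R := k) a
  constructor
  · -- L part
    rintro β' ⟨τ, hτ⟩
    have hβτ : β' + τ = β i := by
      by_contra hne'
      exact hτ (hgr (β i) (b i) (hb i) β' τ hne')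
    have hZ : TensorProduct.map (projT 𝒜 β' τ) (proj 𝒜 (δ i))
        ((LinearMap.rTensor A (Coalgebra.comul (R := k))) (Coalgebra.comul (R := k) a))
        = ∑ j ∈ Finset.univ.filter (fun j => β j = β i ∧ δ j = δ i),
            (projT 𝒜 β' τ (Coalgebra.comul (R := k) (b j))) ⊗ₜ[k] c j := by
      rw [hW, map_sum, Finset.sum_filter]
      refine Finset.sum_congr rfl fun j _ => ?_
      rw [TensorProduct.map_tmul, proj_of_mem 𝒜 (hc j)]
      by_cases h1 : β j = β i
      · by_cases h2 : δ j = δ i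
        · simp [h1, h2]
        · simp [h1, h2, eq_comm (a := δ i)]
      · have h0 : projT 𝒜 β' τ (Coalgebra.comul (R := k) (b j)) = 0 :=
          hgr (β j) (b j) (hb j) β' τ (by rw [hβτ]; exact fun hh => h1 hh.symm)
        simp [h0, h1]
    have hZne : (∑ j ∈ Finset.univ.filter (fun j => β j = β i ∧ δ j = δ i),
        (projT 𝒜 β' τ (Coalgebra.comul (R := k) (b j))) ⊗ₜ[k] c j) ≠ 0 := by
      obtain ⟨f, hf⟩ := exists_dual_fin (hindC (β i) (δ i)) i ⟨rfl, rfl⟩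
      exact sum_tmul_ne_zero_right _ _ c f i (by simp)
        (fun l hl => hf l (by simpa using hl)) hτ
    have key : TensorProduct.map (proj 𝒜 β')
        (TensorProduct.map (proj 𝒜 τ) (proj 𝒜 (δ i)))
        (∑ j, b j ⊗ₜ[k] (Coalgebra.comul (R := k) (c j))) ≠ 0 := by
      rw [← hW', ← hassoc, TensorProduct.map_map_assoc]
      intro h0
      apply hZne
      rw [← hZ]
      have h1 := (TensorProduct.assoc k A A A).map_eq_zero_iff.mp h0
      simpa [projT] using h1
    have hexp : TensorProduct.map (proj 𝒜 β')
        (TensorProduct.map (proj 𝒜 τ) (proj 𝒜 (δ i)))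
        (∑ j, b j ⊗ₜ[k] (Coalgebra.comul (R := k) (c j)))
        = ∑ j, (proj 𝒜 β' (b j)) ⊗ₜ[k]
            (TensorProduct.map (proj 𝒜 τ) (proj 𝒜 (δ i)) (Coalgebra.comul (R := k) (c j))) := by
      rw [map_sum]
      exact Finset.sum_congr rfl fun j _ => TensorProduct.map_tmul _ _ _ _
    have hex : ∃ j, proj 𝒜 β' (b j) ≠ 0 := by
      by_contra hall
      push_neg at hall
      apply key
      rw [hexp]
      exact Finset.sum_eq_zero fun j _ => by rw [hall j, TensorProduct.zero_tmul]
    obtain ⟨j, hj⟩ := hex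
    have hβ'j : β' = β j := by
      by_contra hne'
      exact hj (by rw [proj_of_mem 𝒜 (hb j), if_neg hne'])
    rw [hβ'j]
    exact (hLR j).1
  · -- R part
    rintro γ' ⟨β'', hγ'⟩
    have hδτ : β'' + γ' = δ i := by
      by_contra hne'
      exact hγ' (hgr (δ i) (c i) (hc i) β'' γ' hne')
    have hZ : TensorProduct.map (proj 𝒜 (β i))
        (TensorProduct.map (proj 𝒜 β'') (proj 𝒜 γ'))
        ((LinearMap.lTensor A (Coalgebra.comul (R := k))) (Coalgebra.comul (R := k) a))
        = ∑ j ∈ Finset.univ.filter (fun j => β j = β i ∧ δ j = δ i),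
            b j ⊗ₜ[k] (projT 𝒜 β'' γ' (Coalgebra.comul (R := k) (c j))) := by
      rw [hW', map_sum, Finset.sum_filter]
      refine Finset.sum_congr rfl fun j _ => ?_
      rw [TensorProduct.map_tmul, proj_of_mem 𝒜 (hb j)]
      by_cases h2 : δ j = δ i
      · by_cases h1 : β j = β i
        · simp [h1, h2, projT]
        · simp [h1, h2, eq_comm (a := β i)]
      · have h0 : TensorProduct.map (proj 𝒜 β'') (proj 𝒜 γ')
            (Coalgebra.comul (R := k) (c j)) = 0 := by
          have := hgr (δ j) (c j) (hc j) β'' γ' (by rw [hδτ]; exact fun hh => h2 hh.symm)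
          simpa [projT] using this
        simp [h0, h2]
    have hZne : (∑ j ∈ Finset.univ.filter (fun j => β j = β i ∧ δ j = δ i),
        b j ⊗ₜ[k] (projT 𝒜 β'' γ' (Coalgebra.comul (R := k) (c j)))) ≠ 0 := by
      obtain ⟨f, hf⟩ := exists_dual_fin (hindB (β i) (δ i)) i ⟨rfl, rfl⟩
      exact sum_tmul_ne_zero_left _ _ b f i (by simp)
        (fun l hl => hf l (by simpa using hl)) hγ'
    have key : TensorProduct.map (TensorProduct.map (proj 𝒜 (β i)) (proj 𝒜 β''))
        (proj 𝒜 γ')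
        (∑ j, (Coalgebra.comul (R := k) (b j)) ⊗ₜ[k] c j) ≠ 0 := by
      intro h0
      apply hZne
      rw [← hZ, ← hassoc, TensorProduct.map_map_assoc]
      have : TensorProduct.map (TensorProduct.map (proj 𝒜 (β i)) (proj 𝒜 β''))
          (proj 𝒜 γ')
          ((LinearMap.rTensor A (Coalgebra.comul (R := k))) (Coalgebra.comul (R := k) a)) = 0 := by
        rw [hW]; exact h0
      rw [this]
      exact (TensorProduct.assoc k A A A).map_zero
    have hexp : TensorProduct.map (TensorProduct.map (proj 𝒜 (β i)) (proj 𝒜 β''))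
        (proj 𝒜 γ')
        (∑ j, (Coalgebra.comul (R := k) (b j)) ⊗ₜ[k] c j)
        = ∑ j, (TensorProduct.map (proj 𝒜 (β i)) (proj 𝒜 β'')
            (Coalgebra.comul (R := k) (b j))) ⊗ₜ[k] (proj 𝒜 γ' (c j)) := by
      rw [map_sum]
      exact Finset.sum_congr rfl fun j _ => TensorProduct.map_tmul _ _ _ _
    have hex : ∃ j, proj 𝒜 γ' (c j) ≠ 0 := by
      by_contra hall
      push_neg at hall
      apply key
      rw [hexp]
      exact Finset.sum_eq_zero fun j _ => by rw [hall j, TensorProduct.tmul_zero]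
    obtain ⟨j, hj⟩ := hex
    have hγ'j : γ' = δ j := by
      by_contra hne'
      exact hj (by rw [proj_of_mem 𝒜 (hc j), if_neg hne'])
    rw [hγ'j]
    exact (hLR j).2
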